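/- Let G be a finite simple graph, c: V(G) → ℝ_{>0}, κ: V(G) → ℤ with 0 ≤ κ(u) ≤ d(u) for all u, and suppose β(G,c,κ) = ∑_{u∈V(G)} c(u)(d(u)−κ(u))(d(u)−κ(u)+1)/(2(d(u)+1)). Then for every vertex u of G: c(u)(d(u)−κ(u)) = c(u)(d(u)−κ(u))(d(u)−κ(u)+1)/(2(d(u)+1)) + ∑_{v∈N(u)} c(v)(d(v)−κ(v))(d(v)−κ(v)+1)/(2(d(v)+1)) − ∑_{v∈N(u)} c(v)(d(v)−κ(v)−1)(d(v)−κ(v))/(2d(v)). -/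

import Mathlib

variable {V : Type*} [Fintype V] [DecidableEq V]

/-- A list of vertices witnesses κ-degeneracy: each vertex has at most κ of it
neighbors among the earlier vertices of the ordering. -/
def DegenList (G : SimpleGraph V) [DecidableRel G.Adj] (κ : V → ℤ) (l : List V) : Prop :=
  l.Nodup ∧ ∀ i : Fin l.length,
    ((((l.take i).toFinset).filter (fun v => G.Adj (l.get i) v)).card : ℤ) ≤ κ (l.get i)

/-- A set of vertices is κ-degenerate if it admits a suitable linear ordering. -/
def IsDegen (G : SimpleGraph V) [DecidableRel G.Adj] (κ : V → ℤ) (I : Finset V) : Prop :=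
  ∃ l : List V, l.toFinset = I ∧ DegenList G κ l

/-- Minimum total c-weighted increase ι making the whole vertex set (κ+ι)-degenerate. -/
noncomputable def betaW (G : SimpleGraph V) [DecidableRel G.Adj] (c : V → ℝ) (κ : V → ℤ) : ℝ :=
  sInf {x : ℝ | ∃ ι : V → ℤ, (∀ u, 0 ≤ ι u) ∧
    IsDegen G (fun u => κ u + ι u) Finset.univ ∧ x = ∑ u : V, c u * (ι u : ℝ)}


section Aux
set_option linter.unusedSectionVars false
variable {n : ℕ}

def cnt (σ : Fin n ≃ V) (w : V) (N : Finset V) : ℕ :=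
  (N.filter fun v => σ.symm v < σ.symm w).card

def nextV (σ : Fin n ≃ V) (w : V) (N : Finset V) : V :=
  if h : ((N.filter fun x => σ.symm w < σ.symm x).image fun x => σ.symm x).Nonempty
  then σ (((N.filter fun x => σ.symm w < σ.symm x).image fun x => σ.symm x).min' h) else w

def prevV (σ : Fin n ≃ V) (w : V) (N : Finset V) : V :=
  if h : ((N.filter fun x => σ.symm x < σ.symm w).image fun x => σ.symm x).Nonempty
  then σ (((N.filter fun x => σ.symm x < σ.symm w).image fun x => σ.symm x).max' h) else w

lemma nextV_spec (σ : Fin n ≃ V) (w : V) (N : Finset V)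
    (h : (N.filter fun x => σ.symm w < σ.symm x).Nonempty) :
    nextV σ w N ∈ N ∧ σ.symm w < σ.symm (nextV σ w N) ∧
      ∀ x ∈ N, σ.symm w < σ.symm x → σ.symm (nextV σ w N) ≤ σ.symm x := by
  have h' := h.image (fun x => σ.symm x)
  rw [nextV, dif_pos h']
  obtain ⟨x, hx, hxe⟩ := Finset.mem_image.mp (Finset.min'_mem _ h')
  rw [← hxe, Equiv.apply_symm_apply]
  simp only [Finset.mem_filter] at hx
  refine ⟨hx.1, hx.2, fun y hy hwy => ?_⟩
  rw [hxe]
  exact Finset.min'_le _ _ (Finset.mem_image_of_mem _ (Finset.mem_filter.mpr ⟨hy, hwy⟩))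

lemma prevV_spec (σ : Fin n ≃ V) (w : V) (N : Finset V)
    (h : (N.filter fun x => σ.symm x < σ.symm w).Nonempty) :
    prevV σ w N ∈ N ∧ σ.symm (prevV σ w N) < σ.symm w ∧
      ∀ x ∈ N, σ.symm x < σ.symm w → σ.symm x ≤ σ.symm (prevV σ w N) := by
  have h' := h.image (fun x => σ.symm x)
  rw [prevV, dif_pos h']
  obtain ⟨x, hx, hxe⟩ := Finset.mem_image.mp (Finset.max'_mem _ h')
  rw [← hxe, Equiv.apply_symm_apply]
  simp only [Finset.mem_filter] at hx
  refine ⟨hx.1, hx.2, fun y hy hwy => ?_⟩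
  rw [hxe]
  exact Finset.le_max' _ _ (Finset.mem_image_of_mem _ (Finset.mem_filter.mpr ⟨hy, hwy⟩))

lemma swap_symm_apply (σ : Fin n ≃ V) (w v x : V) :
    (σ.trans (Equiv.swap w v)).symm x = σ.symm (Equiv.swap w v x) := by
  simp [Equiv.symm_trans_apply]

lemma trans_swap_swap (σ : Fin n ≃ V) (w v : V) :
    (σ.trans (Equiv.swap w v)).trans (Equiv.swap w v) = σ := by
  ext x; simp [Equiv.swap_apply_self]

lemma after_nonempty (σ : Fin n ≃ V) (w : V) (N : Finset V) (hw : w ∉ N)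
    (h : cnt σ w N < N.card) : (N.filter fun x => σ.symm w < σ.symm x).Nonempty := by
  have hsplit := Finset.card_filter_add_card_filter_not
    (s := N) (p := fun x => σ.symm x < σ.symm w)
  have : (N.filter fun x => ¬ σ.symm x < σ.symm w) = (N.filter fun x => σ.symm w < σ.symm x) := by
    apply Finset.filter_congr
    intro x hx
    have hne : σ.symm x ≠ σ.symm w := fun hh => hw (by
      have : x = w := σ.symm.injective hh
      rwa [this] at hx)
    simp only [not_lt, eq_iff_iff]
    constructor
    · intro hle; exact lt_of_le_of_ne hle hne.symm
    · intro hlt; exact le_of_lt hlt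
  rw [this] at hsplit
  rw [← Finset.card_pos]
  unfold cnt at h
  omega

lemma before_nonempty (σ : Fin n ≃ V) (w : V) (N : Finset V)
    (h : 0 < cnt σ w N) : (N.filter fun x => σ.symm x < σ.symm w).Nonempty := by
  unfold cnt at h
  exact Finset.card_pos.mp h

lemma next_step (σ : Fin n ≃ V) (w : V) (N : Finset V) (hw : w ∉ N)
    (h : cnt σ w N < N.card) :
    nextV σ w N ∈ N ∧
      cnt (σ.trans (Equiv.swap w (nextV σ w N))) w N = cnt σ w N + 1 ∧
      prevV (σ.trans (Equiv.swap w (nextV σ w N))) w N = nextV σ w N := by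
  obtain ⟨hvN, hwv, hmin⟩ := nextV_spec σ w N (after_nonempty σ w N hw h)
  set v := nextV σ w N with hv
  set τ := σ.trans (Equiv.swap w v) with hτ
  have hvw : v ≠ w := fun hh => hw (hh ▸ hvN)
  have hτw : τ.symm w = σ.symm v := by
    rw [swap_symm_apply, Equiv.swap_apply_left]
  have hτv : τ.symm v = σ.symm w := by
    rw [swap_symm_apply, Equiv.swap_apply_right]
  have hτx : ∀ x, x ≠ w → x ≠ v → τ.symm x = σ.symm x := by
    intro x h1 h2
    rw [swap_symm_apply, Equiv.swap_apply_of_ne_of_ne h1 h2]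
  -- the new "before" filter is insert v (old before filter)
  have hfilter : (N.filter fun x => τ.symm x < τ.symm w)
      = insert v (N.filter fun x => σ.symm x < σ.symm w) := by
    ext x
    simp only [Finset.mem_filter, Finset.mem_insert, hτw]
    constructor
    · rintro ⟨hxN, hxlt⟩
      by_cases hxv : x = v
      · exact Or.inl hxv
      · have hxw : x ≠ w := fun hh => hw (hh ▸ hxN)
        rw [hτx x hxw hxv] at hxlt
        right
        refine ⟨hxN, ?_⟩
        rcases lt_trichotomy (σ.symm x) (σ.symm w) with h1 | h1 | h1
        · exact h1
        · exact absurd (σ.symm.injective h1) hxw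
        · exact absurd (hmin x hxN h1) (not_le.mpr hxlt)
    · rintro (rfl | ⟨hxN, hxlt⟩)
      · exact ⟨hvN, by rw [hτv]; exact hwv⟩
      · have hxv : x ≠ v := fun hh => by
          rw [hh] at hxlt; exact absurd (hxlt.trans hwv) (lt_irrefl _)
        have hxw : x ≠ w := fun hh => hw (hh ▸ hxN)
        exact ⟨hxN, by rw [hτx x hxw hxv]; exact hxlt.trans hwv⟩
  have hvnotold : v ∉ (N.filter fun x => σ.symm x < σ.symm w) := by
    simp only [Finset.mem_filter, not_and, not_lt]
    intro _; exact le_of_lt hwv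
  have hcnt : cnt τ w N = cnt σ w N + 1 := by
    unfold cnt
    rw [hfilter, Finset.card_insert_of_notMem hvnotold]
  refine ⟨hvN, hcnt, ?_⟩
  -- prevV τ w N = v
  have hBne : (N.filter fun x => τ.symm x < τ.symm w).Nonempty := by
    rw [hfilter]; exact Finset.insert_nonempty _ _
  obtain ⟨hp1, hp2, hp3⟩ := prevV_spec τ w N hBne
  -- prevV τ is in the new filter, with max position; v has position σ.symm w which is max
  have hvpos : τ.symm v = σ.symm w := hτv
  have hple : τ.symm (prevV τ w N) ≤ τ.symm v := by
    rw [hvpos]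
    -- every member x of new filter has τ.symm x ≤ σ.symm w
    have hmem : prevV τ w N ∈ insert v (N.filter fun x => σ.symm x < σ.symm w) := by
      rw [← hfilter]; exact Finset.mem_filter.mpr ⟨hp1, hp2⟩
    rcases Finset.mem_insert.mp hmem with hh | hh
    · rw [hh, hvpos]
    · obtain ⟨hxN, hxlt⟩ := Finset.mem_filter.mp hh
      have hxv : prevV τ w N ≠ v := fun he => hvnotold (he ▸ hh)
      have hxw : prevV τ w N ≠ w := fun he => hw (he ▸ hxN)
      rw [hτx _ hxw hxv]
      exact le_of_lt hxlt
  have hpge : τ.symm v ≤ τ.symm (prevV τ w N) :=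
    hp3 v hvN (by rw [hvpos, hτw]; exact hwv)
  exact τ.symm.injective (le_antisymm hpge hple).symm

lemma prev_step (σ : Fin n ≃ V) (w : V) (N : Finset V) (hw : w ∉ N)
    (h : 0 < cnt σ w N) :
    prevV σ w N ∈ N ∧
      cnt (σ.trans (Equiv.swap w (prevV σ w N))) w N + 1 = cnt σ w N ∧
      nextV (σ.trans (Equiv.swap w (prevV σ w N))) w N = prevV σ w N := by
  obtain ⟨hvN, hvw', hmax⟩ := prevV_spec σ w N (before_nonempty σ w N h)
  set v := prevV σ w N with hv
  set τ := σ.trans (Equiv.swap w v) with hτ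
  have hvw : v ≠ w := fun hh => hw (hh ▸ hvN)
  have hτw : τ.symm w = σ.symm v := by
    rw [swap_symm_apply, Equiv.swap_apply_left]
  have hτv : τ.symm v = σ.symm w := by
    rw [swap_symm_apply, Equiv.swap_apply_right]
  have hτx : ∀ x, x ≠ w → x ≠ v → τ.symm x = σ.symm x := by
    intro x h1 h2
    rw [swap_symm_apply, Equiv.swap_apply_of_ne_of_ne h1 h2]
  -- new before filter = old before filter minus v
  have hfilter : (N.filter fun x => τ.symm x < τ.symm w)
      = (N.filter fun x => σ.symm x < σ.symm w).erase v := by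
    ext x
    simp only [Finset.mem_filter, Finset.mem_erase, hτw]
    constructor
    · rintro ⟨hxN, hxlt⟩
      have hxv : x ≠ v := by
        rintro rfl
        rw [hτv] at hxlt
        exact absurd (hxlt.trans hvw') (lt_irrefl _)
      have hxw : x ≠ w := fun hh => hw (hh ▸ hxN)
      rw [hτx x hxw hxv] at hxlt
      exact ⟨hxv, hxN, hxlt.trans hvw'⟩
    · rintro ⟨hxv, hxN, hxlt⟩
      have hxw : x ≠ w := fun hh => hw (hh ▸ hxN)
      rw [hτx x hxw hxv]
      refine ⟨hxN, ?_⟩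
      have hle := hmax x hxN hxlt
      exact lt_of_le_of_ne hle (fun hh => hxv (σ.symm.injective hh))
  have hvold : v ∈ (N.filter fun x => σ.symm x < σ.symm w) :=
    Finset.mem_filter.mpr ⟨hvN, hvw'⟩
  have hcnt : cnt τ w N + 1 = cnt σ w N := by
    unfold cnt
    rw [hfilter, Finset.card_erase_of_mem hvold]
    have : 0 < (N.filter fun x => σ.symm x < σ.symm w).card := Finset.card_pos.mpr ⟨v, hvold⟩
    omega
  refine ⟨hvN, hcnt, ?_⟩
  -- nextV τ w N = v : v is now after w (τ.symm v = σ.symm w > σ.symm v = τ.symm w), minimal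
  have hvafter : τ.symm w < τ.symm v := by rw [hτw, hτv]; exact hvw'
  have hAne : (N.filter fun x => τ.symm w < τ.symm x).Nonempty :=
    ⟨v, Finset.mem_filter.mpr ⟨hvN, hvafter⟩⟩
  obtain ⟨hp1, hp2, hp3⟩ := nextV_spec τ w N hAne
  have hple : τ.symm v ≤ τ.symm (nextV τ w N) := by
    rw [hτv]
    by_cases hvv : nextV τ w N = v
    · rw [hvv, hτv]
    · have hxw : nextV τ w N ≠ w := fun hh => hw (hh ▸ hp1)
      rw [hτx _ hxw hvv] at hp2 ⊢
      rw [hτw] at hp2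
      -- σ.symm v < σ.symm (nextV τ): show σ.symm w ≤ σ.symm (nextV τ)
      rcases lt_trichotomy (σ.symm w) (σ.symm (nextV τ w N)) with h1 | h1 | h1
      · exact le_of_lt h1
      · exact le_of_eq h1
      · exact absurd (hmax _ hp1 h1) (not_le.mpr hp2)
  have hpge : τ.symm (nextV τ w N) ≤ τ.symm v := hp3 v hvN hvafter
  exact τ.symm.injective (le_antisymm hpge hple)

lemma cnt_le (σ : Fin n ≃ V) (w : V) (N : Finset V) : cnt σ w N ≤ N.card :=
  Finset.card_filter_le _ _

lemma step_card (w : V) (N : Finset V) (hw : w ∉ N) (S : Finset (Fin n ≃ V))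
    (hS : ∀ σ ∈ S, ∀ v ∈ N, σ.trans (Equiv.swap w v) ∈ S)
    (j : ℕ) (hj : j < N.card) :
    (S.filter fun σ => cnt σ w N = j).card = (S.filter fun σ => cnt σ w N = j + 1).card := by
  refine Finset.card_bij' (fun σ _ => σ.trans (Equiv.swap w (nextV σ w N)))
    (fun τ _ => τ.trans (Equiv.swap w (prevV τ w N))) ?_ ?_ ?_ ?_
  · intro σ hσ
    obtain ⟨hσS, hσc⟩ := Finset.mem_filter.mp hσ
    obtain ⟨h1, h2, _⟩ := next_step σ w N hw (by omega)
    exact Finset.mem_filter.mpr ⟨hS σ hσS _ h1, by rw [h2, hσc]⟩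
  · intro τ hτ
    obtain ⟨hτS, hτc⟩ := Finset.mem_filter.mp hτ
    obtain ⟨h1, h2, _⟩ := prev_step τ w N hw (by omega)
    refine Finset.mem_filter.mpr ⟨hS τ hτS _ h1, ?_⟩
    omega
  · intro σ hσ
    obtain ⟨hσS, hσc⟩ := Finset.mem_filter.mp hσ
    obtain ⟨_, _, h3⟩ := next_step σ w N hw (by omega)
    simp only [h3, trans_swap_swap]
  · intro τ hτ
    obtain ⟨hτS, hτc⟩ := Finset.mem_filter.mp hτ
    obtain ⟨_, _, h3⟩ := prev_step τ w N hw (by omega)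
    simp only [h3, trans_swap_swap]

lemma uniform_card (w : V) (N : Finset V) (hw : w ∉ N) (S : Finset (Fin n ≃ V))
    (hS : ∀ σ ∈ S, ∀ v ∈ N, σ.trans (Equiv.swap w v) ∈ S) :
    ∀ j, j ≤ N.card →
      (S.filter fun σ => cnt σ w N = j).card = (S.filter fun σ => cnt σ w N = 0).card := by
  intro j
  induction j with
  | zero => intro _; rfl
  | succ k ih =>
    intro hk
    rw [← step_card w N hw S hS k (by omega)]
    exact ih (by omega)

lemma card_S_eq (w : V) (N : Finset V) (hw : w ∉ N) (S : Finset (Fin n ≃ V))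
    (hS : ∀ σ ∈ S, ∀ v ∈ N, σ.trans (Equiv.swap w v) ∈ S) :
    S.card = (N.card + 1) * (S.filter fun σ => cnt σ w N = 0).card := by
  rw [Finset.card_eq_sum_card_fiberwise (f := fun σ => cnt σ w N)
    (t := Finset.range (N.card + 1)) (fun σ _ => Finset.mem_range.mpr
      (Nat.lt_succ_of_le (cnt_le σ w N)))]
  rw [Finset.sum_congr rfl (fun j hj => uniform_card w N hw S hS j
    (by have := Finset.mem_range.mp hj; omega))]
  rw [Finset.sum_const, Finset.card_range, smul_eq_mul]

lemma uniform_sum (w : V) (N : Finset V) (hw : w ∉ N) (S : Finset (Fin n ≃ V))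
    (hS : ∀ σ ∈ S, ∀ v ∈ N, σ.trans (Equiv.swap w v) ∈ S) (F : ℕ → ℝ) :
    ((N.card + 1 : ℕ) : ℝ) * ∑ σ ∈ S, F (cnt σ w N)
      = (S.card : ℝ) * ∑ j ∈ Finset.range (N.card + 1), F j := by
  have hpart : ∑ σ ∈ S, F (cnt σ w N)
      = ∑ j ∈ Finset.range (N.card + 1), ∑ σ ∈ S.filter (fun σ => cnt σ w N = j), F (cnt σ w N) :=
    (Finset.sum_fiberwise_of_maps_to (fun σ _ => Finset.mem_range.mpr (by
      have := cnt_le σ w N; omega)) _).symm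
  have hinner : ∀ j ∈ Finset.range (N.card + 1),
      ∑ σ ∈ S.filter (fun σ => cnt σ w N = j), F (cnt σ w N)
        = ((S.filter fun σ => cnt σ w N = 0).card : ℝ) * F j := by
    intro j hj
    rw [Finset.sum_congr rfl (fun σ hσ => by rw [(Finset.mem_filter.mp hσ).2])]
    rw [Finset.sum_const, uniform_card w N hw S hS j (by
      have := Finset.mem_range.mp hj; omega)]
    simp [nsmul_eq_mul]
  rw [hpart, Finset.sum_congr rfl hinner, ← Finset.mul_sum, card_S_eq w N hw S hS]
  push_cast
  ring

lemma gauss_sum (d : ℕ) (k : ℤ) (hk : 0 ≤ k) :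
    2 * ∑ j ∈ Finset.range (d + 1), max 0 ((j : ℤ) - k)
      = (max 0 ((d : ℤ) - k)) * (max 0 ((d : ℤ) - k) + 1) := by
  induction d with
  | zero =>
    rw [Finset.sum_range_one]
    have e : max 0 ((0 : ℤ) - k) = 0 := max_eq_left (by omega)
    rw [show ((0:ℕ):ℤ) = (0:ℤ) from rfl, e]
    ring
  | succ m ih =>
    rw [Finset.sum_range_succ, mul_add, ih]
    have hc : ((m + 1 : ℕ) : ℤ) = (m : ℤ) + 1 := by push_cast; ring
    rw [hc]
    rcases le_or_gt k m with h | h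
    · have e1 : max 0 ((m : ℤ) - k) = (m : ℤ) - k := max_eq_right (by omega)
      have e2 : max 0 ((m : ℤ) + 1 - k) = (m : ℤ) + 1 - k := max_eq_right (by omega)
      rw [e1, e2]
      ring
    · have e1 : max 0 ((m : ℤ) - k) = 0 := max_eq_left (by omega)
      have e2 : max 0 ((m : ℤ) + 1 - k) = 0 := max_eq_left (by omega)
      rw [e1, e2]
      ring

lemma degenList_ofFn (G : SimpleGraph V) [DecidableRel G.Adj] (κ : V → ℤ)
    (σ : Fin (Fintype.card V) ≃ V) :
    DegenList G (fun u => κ u + max 0 ((cnt σ u (G.neighborFinset u) : ℤ) - κ u))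
      (List.ofFn (fun i => σ i)) := by
  refine ⟨List.nodup_ofFn.mpr σ.injective, ?_⟩
  intro i
  have hlen : (List.ofFn fun i => σ i).length = Fintype.card V := List.length_ofFn
  have hget : (List.ofFn fun i => σ i).get i = σ (Fin.cast hlen i) := List.get_ofFn _ i
  rw [hget]
  have hsymm : σ.symm (σ (Fin.cast hlen i)) = Fin.cast hlen i := Equiv.symm_apply_apply _ _
  have hset : (((List.ofFn fun i => σ i).take ↑i).toFinset).filter
        (fun v => G.Adj (σ (Fin.cast hlen i)) v)
      = (G.neighborFinset (σ (Fin.cast hlen i))).filter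
        (fun v => σ.symm v < σ.symm (σ (Fin.cast hlen i))) := by
    ext v
    simp only [Finset.mem_filter, List.mem_toFinset, SimpleGraph.mem_neighborFinset]
    rw [List.mem_take_iff_getElem]
    constructor
    · rintro ⟨⟨j, hj, hjv⟩, hadj⟩
      have hj2 : j < Fintype.card V := by omega
      have hjv' : σ ⟨j, hj2⟩ = v := by
        rw [← hjv]; simp [List.getElem_ofFn]
      refine ⟨hadj, ?_⟩
      rw [hsymm, ← hjv', Equiv.symm_apply_apply]
      exact Fin.lt_def.mpr (by simpa using (by omega : j < (i : ℕ)))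
    · rintro ⟨hadj, hlt⟩
      rw [hsymm] at hlt
      have h1 : (σ.symm v : ℕ) < (i : ℕ) := Fin.lt_def.mp hlt
      have h3 : (σ.symm v : ℕ) < Fintype.card V := (σ.symm v).isLt
      refine ⟨⟨(σ.symm v : ℕ), by omega, ?_⟩, hadj⟩
      simp [List.getElem_ofFn]
  rw [hset]
  have hc : ((G.neighborFinset (σ (Fin.cast hlen i))).filter
        (fun v => σ.symm v < σ.symm (σ (Fin.cast hlen i)))).card
      = cnt σ (σ (Fin.cast hlen i)) (G.neighborFinset (σ (Fin.cast hlen i))) := rfl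
  rw [hc]
  dsimp only
  have := le_max_right (0 : ℤ)
    ((cnt σ (σ (Fin.cast hlen i)) (G.neighborFinset (σ (Fin.cast hlen i))) : ℤ)
      - κ (σ (Fin.cast hlen i)))
  omega

lemma sum_term (w : V) (N : Finset V) (hw : w ∉ N) (S : Finset (Fin n ≃ V))
    (hS : ∀ σ ∈ S, ∀ v ∈ N, σ.trans (Equiv.swap w v) ∈ S) (cc : ℝ) (k : ℤ) (hk : 0 ≤ k) :
    ∑ σ ∈ S, cc * ((max 0 ((cnt σ w N : ℤ) - k) : ℤ) : ℝ)
      = (S.card : ℝ) * (cc * ((max 0 ((N.card : ℤ) - k) : ℤ) : ℝ)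
          * (((max 0 ((N.card : ℤ) - k) : ℤ) : ℝ) + 1) / (2 * ((N.card : ℝ) + 1))) := by
  have hU := uniform_sum w N hw S hS (fun j => cc * ((max 0 ((j : ℤ) - k) : ℤ) : ℝ))
  have hG : ∑ j ∈ Finset.range (N.card + 1), cc * ((max 0 ((j : ℤ) - k) : ℤ) : ℝ)
      = cc * ((max 0 ((N.card : ℤ) - k) : ℤ) : ℝ)
          * (((max 0 ((N.card : ℤ) - k) : ℤ) : ℝ) + 1) / 2 := by
    rw [← Finset.mul_sum]
    have h2 : ((2 * ∑ j ∈ Finset.range (N.card + 1), max 0 ((j : ℤ) - k) : ℤ) : ℝ)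
        = (((max 0 ((N.card : ℤ) - k)) * (max 0 ((N.card : ℤ) - k) + 1) : ℤ) : ℝ) := by
      exact_mod_cast congrArg (fun z : ℤ => (z : ℝ)) (gauss_sum N.card k hk)
    push_cast at h2 ⊢
    linear_combination (cc / 2) * h2
  rw [hG] at hU
  have hpos : ((N.card : ℝ) + 1) ≠ 0 := by positivity
  have hcast : ((N.card + 1 : ℕ) : ℝ) = (N.card : ℝ) + 1 := by push_cast; ring
  rw [hcast] at hU
  push_cast at hU ⊢
  field_simp
  linear_combination 2 * hU

lemma max_cast_eq (dd : ℕ) (k : ℤ) (hk : k ≤ (dd : ℤ)) :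
    ((max 0 ((dd : ℤ) - k) : ℤ) : ℝ) = (dd : ℝ) - (k : ℝ) := by
  rw [max_eq_right (by omega)]
  push_cast
  ring

end Aux

/-- Key local identity for extremal triples of the partial-incentives bound. -/
theorem extremal_local_identity_beta (G : SimpleGraph V) [DecidableRel G.Adj]
    (c : V → ℝ) (hc : ∀ u, 0 < c u)
    (κ : V → ℤ) (hκ : ∀ u, 0 ≤ κ u ∧ κ u ≤ (G.degree u : ℤ))
    (hext : betaW G c κ = ∑ u : V,
        c u * (((G.degree u : ℝ) - κ u) * ((G.degree u : ℝ) - κ u + 1)) / (2 * (G.degree u + 1))) :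
    ∀ u : V, c u * ((G.degree u : ℝ) - κ u) =
        c u * (((G.degree u : ℝ) - κ u) * ((G.degree u : ℝ) - κ u + 1)) / (2 * (G.degree u + 1))
      + ∑ v ∈ G.neighborFinset u,
          c v * (((G.degree v : ℝ) - κ v) * ((G.degree v : ℝ) - κ v + 1)) / (2 * (G.degree v + 1))
      - ∑ v ∈ G.neighborFinset u,
          c v * (((G.degree v : ℝ) - κ v - 1) * ((G.degree v : ℝ) - κ v)) / (2 * (G.degree v : ℝ)) := by
  intro u
  classical
  set fR : V → ℝ := fun v =>
      c v * (((G.degree v : ℝ) - κ v) * ((G.degree v : ℝ) - κ v + 1)) / (2 * (G.degree v + 1))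
    with hfR
  set gR : V → ℝ := fun v =>
      c v * (((G.degree v : ℝ) - κ v - 1) * ((G.degree v : ℝ) - κ v)) / (2 * (G.degree v : ℝ))
    with hgR
  set β := betaW G c κ with hβ
  set term : V → (Fin (Fintype.card V) ≃ V) → ℝ := fun v σ =>
      c v * ((max 0 ((cnt σ v (G.neighborFinset v) : ℤ) - κ v) : ℤ) : ℝ) with hterm_def
  set cost : (Fin (Fintype.card V) ≃ V) → ℝ := fun σ => ∑ v : V, term v σ with hcost
  have hNcard : ∀ v : V, (G.neighborFinset v).card = G.degree v := fun v =>
    G.card_neighborFinset_eq_degree v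
  have hwNotMem : ∀ v : V, v ∉ G.neighborFinset v := fun v => by simp
  -- Step A : β is at most every cost
  have hble : ∀ σ, β ≤ cost σ := by
    intro σ
    have hbdd : BddBelow {x : ℝ | ∃ ι : V → ℤ, (∀ w, 0 ≤ ι w) ∧
        IsDegen G (fun w => κ w + ι w) Finset.univ ∧ x = ∑ w : V, c w * (ι w : ℝ)} := by
      refine ⟨0, fun x hx => ?_⟩
      obtain ⟨ι, hι, _, rfl⟩ := hx
      exact Finset.sum_nonneg fun w _ => mul_nonneg (hc w).le (by exact_mod_cast hι w)
    have hmem : cost σ ∈ {x : ℝ | ∃ ι : V → ℤ, (∀ w, 0 ≤ ι w) ∧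
        IsDegen G (fun w => κ w + ι w) Finset.univ ∧ x = ∑ w : V, c w * (ι w : ℝ)} := by
      refine ⟨fun w => max 0 ((cnt σ w (G.neighborFinset w) : ℤ) - κ w),
        fun w => le_max_left _ _, ⟨List.ofFn (fun i => σ i), ?_, degenList_ofFn G κ σ⟩, ?_⟩
      · ext v
        simp only [List.mem_toFinset, List.mem_ofFn, Finset.mem_univ, iff_true]
        exact ⟨σ.symm v, Equiv.apply_symm_apply σ v⟩
      · rw [hcost]
    have hres : betaW G c κ ≤ cost σ := csInf_le hbdd hmem
    rw [hβ]
    exact hres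
  -- per-vertex sum over any swap-closed family
  have hterm : ∀ (S : Finset (Fin (Fintype.card V) ≃ V)) (v : V),
      (∀ σ ∈ S, ∀ x ∈ G.neighborFinset v, σ.trans (Equiv.swap v x) ∈ S) →
      ∑ σ ∈ S, term v σ = (S.card : ℝ) * fR v := by
    intro S v hS
    rw [hterm_def]
    rw [sum_term v _ (hwNotMem v) S hS (c v) (κ v) (hκ v).1]
    rw [hNcard v, max_cast_eq _ _ (hκ v).2, hfR]
    ring
  -- Step B : total over all permutations
  have hclosedU : ∀ (v : V), ∀ σ ∈ (Finset.univ : Finset (Fin (Fintype.card V) ≃ V)),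
      ∀ x ∈ G.neighborFinset v, σ.trans (Equiv.swap v x) ∈ Finset.univ :=
    fun _ _ _ _ _ => Finset.mem_univ _
  have hsumU : ∑ σ : Fin (Fintype.card V) ≃ V, cost σ
      = ((Finset.univ : Finset (Fin (Fintype.card V) ≃ V)).card : ℝ) * β := by
    rw [hcost]
    rw [Finset.sum_comm]
    rw [Finset.sum_congr rfl (fun v _ => hterm Finset.univ v (hclosedU v))]
    rw [← Finset.mul_sum, hext]
  -- Step C : every cost equals β
  have hall : ∀ σ, cost σ = β := by
    by_contra hcon
    push_neg at hcon
    obtain ⟨σ₀, hσ₀⟩ := hcon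
    have hlt : β < cost σ₀ := lt_of_le_of_ne (hble σ₀) (Ne.symm hσ₀)
    have hstrict : ∑ _σ : Fin (Fintype.card V) ≃ V, β < ∑ σ : Fin (Fintype.card V) ≃ V, cost σ :=
      Finset.sum_lt_sum (fun σ _ => hble σ) ⟨σ₀, Finset.mem_univ _, hlt⟩
    rw [hsumU, Finset.sum_const, nsmul_eq_mul] at hstrict
    exact lt_irrefl _ hstrict
  -- Step D : permutations with u in the last position
  set Su : Finset (Fin (Fintype.card V) ≃ V) :=
    Finset.univ.filter (fun σ => ∀ x : V, σ.symm x ≤ σ.symm u) with hSu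
  have hSuu : ∀ σ ∈ Su, ∀ x : V, σ.symm x ≤ σ.symm u := fun σ hσ => by
    have := Finset.mem_filter.mp hσ
    exact this.2
  have hSune : Su.Nonempty := by
    have hpos : 0 < Fintype.card V := Fintype.card_pos_iff.mpr ⟨u⟩
    set e1 : Fin (Fintype.card V) ≃ V := (Fintype.equivFin V).symm with he1
    have htoplt : Fintype.card V - 1 < Fintype.card V := by omega
    set top : Fin (Fintype.card V) := ⟨Fintype.card V - 1, htoplt⟩ with htop
    have hle : ∀ i : Fin (Fintype.card V), i ≤ top := by
      intro i
      have h2 := i.isLt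
      rw [Fin.le_def]
      show (i : ℕ) ≤ Fintype.card V - 1
      omega
    refine ⟨e1.trans (Equiv.swap (e1 top) u), Finset.mem_filter.mpr ⟨Finset.mem_univ _, fun x => ?_⟩⟩
    have h1 : (e1.trans (Equiv.swap (e1 top) u)).symm u = top := by
      rw [swap_symm_apply, Equiv.swap_apply_right, Equiv.symm_apply_apply]
    rw [h1]
    exact hle _
  have hSucard : (0 : ℝ) < (Su.card : ℝ) := by
    exact_mod_cast Finset.card_pos.mpr hSune
  have hSuclosed : ∀ (w : V) (N : Finset V), u ∉ N → w ≠ u →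
      ∀ σ ∈ Su, ∀ x ∈ N, σ.trans (Equiv.swap w x) ∈ Su := by
    intro w N huN hwu σ hσ x hx
    refine Finset.mem_filter.mpr ⟨Finset.mem_univ _, fun y => ?_⟩
    have hxu : x ≠ u := fun he => huN (he ▸ hx)
    rw [swap_symm_apply, swap_symm_apply,
      show Equiv.swap w x u = u from Equiv.swap_apply_of_ne_of_ne (Ne.symm hwu) (Ne.symm hxu)]
    exact hSuu σ hσ (Equiv.swap w x y)
  -- contribution of u itself over Su
  have hsuma : ∑ σ ∈ Su, term u σ = (Su.card : ℝ) * (c u * ((G.degree u : ℝ) - κ u)) := by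
    have hcda : ∀ σ ∈ Su, cnt σ u (G.neighborFinset u) = G.degree u := by
      intro σ hσ
      unfold cnt
      rw [Finset.filter_true_of_mem, hNcard]
      intro x hx
      have hxu : x ≠ u := ((SimpleGraph.mem_neighborFinset _ _ _).mp hx).ne'
      exact lt_of_le_of_ne (hSuu σ hσ x) (fun he => hxu (σ.symm.injective he))
    simp only [hterm_def]
    rw [Finset.sum_congr rfl (fun σ hσ => by rw [hcda σ hσ])]
    rw [Finset.sum_const, nsmul_eq_mul]
    congr 1
    rw [max_eq_right (by have := (hκ u).2; omega : (0:ℤ) ≤ (G.degree u : ℤ) - κ u)]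
    push_cast
    ring
  -- contribution of a neighbor of u over Su
  have hsumb : ∀ v ∈ G.neighborFinset u,
      ∑ σ ∈ Su, term v σ = (Su.card : ℝ) * gR v := by
    intro v hv
    have hvu : v ≠ u := ((SimpleGraph.mem_neighborFinset _ _ _).mp hv).ne'
    have huNv : u ∈ G.neighborFinset v := by
      rw [SimpleGraph.mem_neighborFinset] at hv ⊢
      exact hv.symm
    have hdpos : 1 ≤ G.degree v := by
      have : 0 < (G.neighborFinset v).card := Finset.card_pos.mpr ⟨u, huNv⟩
      rw [hNcard] at this
      omega
    have hcnt : ∀ σ ∈ Su, cnt σ v (G.neighborFinset v)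
        = cnt σ v ((G.neighborFinset v).erase u) := by
      intro σ hσ
      unfold cnt
      congr 1
      ext x
      simp only [Finset.mem_filter, Finset.mem_erase]
      constructor
      · rintro ⟨hxN, hxlt⟩
        refine ⟨⟨?_, hxN⟩, hxlt⟩
        rintro rfl
        exact absurd hxlt (not_lt.mpr (hSuu σ hσ v))
      · rintro ⟨⟨_, hxN⟩, hxlt⟩
        exact ⟨hxN, hxlt⟩
    have hvNe : v ∉ (G.neighborFinset v).erase u := fun hh =>
      hwNotMem v (Finset.mem_of_mem_erase hh)
    have hclosed : ∀ σ ∈ Su, ∀ x ∈ (G.neighborFinset v).erase u,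
        σ.trans (Equiv.swap v x) ∈ Su :=
      hSuclosed v _ (fun hh => (Finset.mem_erase.mp hh).1 rfl) hvu
    simp only [hterm_def]
    rw [Finset.sum_congr rfl (fun σ hσ => by rw [hcnt σ hσ])]
    rw [sum_term v _ hvNe Su hclosed (c v) (κ v) (hκ v).1]
    have hcard : ((G.neighborFinset v).erase u).card = G.degree v - 1 := by
      rw [Finset.card_erase_of_mem huNv, hNcard]
    rw [hcard]
    have hz : ((G.degree v - 1 : ℕ) : ℤ) = (G.degree v : ℤ) - 1 := by omega
    have hr : ((G.degree v - 1 : ℕ) : ℝ) = (G.degree v : ℝ) - 1 := by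
      push_cast [hdpos]
      ring
    rw [hz, hr]
    rcases eq_or_lt_of_le (hκ v).2 with hκd | hκd
    · rw [max_eq_left (by omega : (G.degree v : ℤ) - 1 - κ v ≤ 0)]
      have hcκ : ((κ v : ℤ) : ℝ) = ((G.degree v : ℕ) : ℝ) := by exact_mod_cast hκd
      simp only [hgR]
      rw [hcκ]
      push_cast
      ring
    · rw [max_eq_right (by omega : (0:ℤ) ≤ (G.degree v : ℤ) - 1 - κ v)]
      simp only [hgR]
      push_cast
      ring
  -- contribution of a non-neighbor over Su
  have hsumc : ∀ v ∈ (insert u (G.neighborFinset u))ᶜ,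
      ∑ σ ∈ Su, term v σ = (Su.card : ℝ) * fR v := by
    intro v hv
    rw [Finset.mem_compl, Finset.mem_insert, not_or] at hv
    have hvu : v ≠ u := hv.1
    have huNv : u ∉ G.neighborFinset v := by
      rw [SimpleGraph.mem_neighborFinset]
      intro hadj
      exact hv.2 ((SimpleGraph.mem_neighborFinset _ _ _).mpr hadj.symm)
    exact hterm Su v (hSuclosed v _ huNv hvu)
  -- assemble
  have hMain : ∑ σ ∈ Su, cost σ
      = (Su.card : ℝ) * (c u * ((G.degree u : ℝ) - κ u))
        + (Su.card : ℝ) * ∑ v ∈ G.neighborFinset u, gR v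
        + (Su.card : ℝ) * ∑ v ∈ (insert u (G.neighborFinset u))ᶜ, fR v := by
    rw [hcost, Finset.sum_comm]
    rw [← Finset.sum_add_sum_compl (insert u (G.neighborFinset u))
      (fun v => ∑ σ ∈ Su, term v σ)]
    rw [Finset.sum_insert (hwNotMem u)]
    rw [hsuma, Finset.sum_congr rfl hsumb, Finset.sum_congr rfl hsumc,
      ← Finset.mul_sum, ← Finset.mul_sum]
  have hMain2 : ∑ σ ∈ Su, cost σ = (Su.card : ℝ) * β := by
    rw [Finset.sum_congr rfl (fun σ _ => hall σ), Finset.sum_const, nsmul_eq_mul]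
  have hsplitB : β = fR u + ∑ v ∈ G.neighborFinset u, fR v
      + ∑ v ∈ (insert u (G.neighborFinset u))ᶜ, fR v := by
    rw [hext]
    rw [← Finset.sum_add_sum_compl (insert u (G.neighborFinset u)) fR,
      Finset.sum_insert (hwNotMem u)]
  have hkey : β = c u * ((G.degree u : ℝ) - κ u)
      + ∑ v ∈ G.neighborFinset u, gR v
      + ∑ v ∈ (insert u (G.neighborFinset u))ᶜ, fR v := by
    have h := hMain2.symm.trans hMain
    have h2 : (Su.card : ℝ) * β = (Su.card : ℝ) * (c u * ((G.degree u : ℝ) - κ u)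
        + ∑ v ∈ G.neighborFinset u, gR v
        + ∑ v ∈ (insert u (G.neighborFinset u))ᶜ, fR v) := by
      rw [h]; ring
    exact mul_left_cancel₀ (ne_of_gt hSucard) h2
  have hfRu : fR u = c u * (((G.degree u : ℝ) - κ u) * ((G.degree u : ℝ) - κ u + 1))
      / (2 * (G.degree u + 1)) := rfl
  rw [← hfRu]
  linarith [hkey, hsplitB]
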